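/- arXiv:2509.24977 — 2 statements merged into one kernel-verified Lean document; each statement's English description precedes it below -/
import Mathlib

section
/- Let G(x; m, v) = (2πv)^(−1/2)·exp(−(x − m)²/(2v)) for v > 0. Let k > 0, D > 0, μ ∈ ℝ and s < t < T. Define m(Δ, w) = μ + (w − μ)e^(−kΔ) and v(Δ) = D²(1 − e^(−2kΔ))/(2k) for Δ > 0. Then for all x, y, z ∈ ℝ: G(x; m(t−s, y), v(t−s))·G(z; m(T−t, x), v(T−t)) / G(z; m(T−s, y), v(T−s)) = G(x; μ_B, σ_B²), where μ_B = μ + [(y − μ)·sinh(k(T−t)) + (z − μ)·sinh(k(t−s))]/sinh(k(T−s)) and σ_B² = (D²/k)·sinh(k(T−t))·sinh(k(t−s))/sinh(k(T−s)). -/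
set_option maxHeartbeats 1600000


/-- The Ornstein–Uhlenbeck bridge propagator. With Gaussian densities
`G(x; m, v) = (2πv)^(−1/2)·exp(−(x − m)²/(2v))` and OU transition densities of mean
`m(Δ, w) = μ + (w − μ)e^(−kΔ)` and variance `v(Δ) = D²(1 − e^(−2kΔ))/(2k)`, the pinned
(bridge) propagator is the Gaussian with the stated hyperbolic-sine mean and variance. -/
theorem ou_bridge_propagator
    (G : ℝ → ℝ → ℝ → ℝ)
    (hG : ∀ x m v : ℝ, 0 < v →
      G x m v = (2 * Real.pi * v) ^ (-(1 : ℝ) / 2) * Real.exp (-(x - m) ^ 2 / (2 * v)))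
    (k D μ s t T : ℝ) (hk : 0 < k) (hD : 0 < D) (hst : s < t) (htT : t < T)
    (m : ℝ → ℝ → ℝ) (v : ℝ → ℝ)
    (hm : ∀ Δ w : ℝ, 0 < Δ → m Δ w = μ + (w - μ) * Real.exp (-k * Δ))
    (hv : ∀ Δ : ℝ, 0 < Δ → v Δ = D ^ 2 * (1 - Real.exp (-2 * k * Δ)) / (2 * k)) :
    ∀ x y z : ℝ,
      G x (m (t - s) y) (v (t - s)) * G z (m (T - t) x) (v (T - t)) /
          G z (m (T - s) y) (v (T - s)) =
        G x (μ + ((y - μ) * Real.sinh (k * (T - t)) + (z - μ) * Real.sinh (k * (t - s))) /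
              Real.sinh (k * (T - s)))
          ((D ^ 2 / k) * Real.sinh (k * (T - t)) * Real.sinh (k * (t - s)) /
            Real.sinh (k * (T - s))) := by
  intro x y z
  have hts : 0 < t - s := by linarith
  have htT' : 0 < T - t := by linarith
  have hTs : 0 < T - s := by linarith
  set A := Real.exp (-k * (t - s)) with hA
  set B := Real.exp (-k * (T - t)) with hB
  have hA0 : 0 < A := Real.exp_pos _
  have hB0 : 0 < B := Real.exp_pos _
  have hA1 : A < 1 := by
    rw [hA]; apply Real.exp_lt_one_iff.mpr; nlinarith
  have hB1 : B < 1 := by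
    rw [hB]; apply Real.exp_lt_one_iff.mpr; nlinarith
  have hA2 : Real.exp (-2 * k * (t - s)) = A ^ 2 := by
    rw [hA, sq, ← Real.exp_add]; congr 1; ring
  have hB2 : Real.exp (-2 * k * (T - t)) = B ^ 2 := by
    rw [hB, sq, ← Real.exp_add]; congr 1; ring
  have hAB : Real.exp (-k * (T - s)) = A * B := by
    rw [hA, hB, ← Real.exp_add]; congr 1; ring
  have hAB2 : Real.exp (-2 * k * (T - s)) = (A * B) ^ 2 := by
    rw [sq, ← hAB, ← Real.exp_add]; congr 1; ring
  have hEA : Real.exp (k * (t - s)) = 1 / A := by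
    rw [eq_div_iff hA0.ne', hA, ← Real.exp_add]
    simp
  have hEB : Real.exp (k * (T - t)) = 1 / B := by
    rw [eq_div_iff hB0.ne', hB, ← Real.exp_add]
    simp
  have hEAB : Real.exp (k * (T - s)) = 1 / (A * B) := by
    rw [eq_div_iff (by positivity), ← hAB, ← Real.exp_add]
    simp
  have hnA : Real.exp (-(k * (t - s))) = A := by rw [hA]; congr 1; ring
  have hnB : Real.exp (-(k * (T - t))) = B := by rw [hB]; congr 1; ring
  have hnAB : Real.exp (-(k * (T - s))) = A * B := by rw [← hAB]; congr 1; ring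
  have hS1 : Real.sinh (k * (t - s)) = (1 - A ^ 2) / (2 * A) := by
    rw [Real.sinh_eq, hEA, hnA]; field_simp
  have hS2 : Real.sinh (k * (T - t)) = (1 - B ^ 2) / (2 * B) := by
    rw [Real.sinh_eq, hEB, hnB]; field_simp
  have hS3 : Real.sinh (k * (T - s)) = (1 - (A * B) ^ 2) / (2 * (A * B)) := by
    rw [Real.sinh_eq, hEAB, hnAB]; field_simp
  have h1A : (0:ℝ) < 1 - A ^ 2 := by nlinarith [sq_nonneg A, hA0, hA1]
  have h1B : (0:ℝ) < 1 - B ^ 2 := by nlinarith [sq_nonneg B, hB0, hB1]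
  have hab : A * B < 1 := lt_of_le_of_lt (by nlinarith : A * B ≤ A) hA1
  have hab0 : 0 < A * B := mul_pos hA0 hB0
  have h1AB : (0:ℝ) < 1 - (A * B) ^ 2 := by nlinarith [hab, hab0]
  have hv1 : 0 < D ^ 2 * (1 - A ^ 2) / (2 * k) := by positivity
  have hv2 : 0 < D ^ 2 * (1 - B ^ 2) / (2 * k) := by positivity
  have hv3 : 0 < D ^ 2 * (1 - (A * B) ^ 2) / (2 * k) := by positivity
  have hσ : (0:ℝ) < (D ^ 2 / k) * Real.sinh (k * (T - t)) * Real.sinh (k * (t - s)) /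
      Real.sinh (k * (T - s)) := by
    rw [hS1, hS2, hS3]; positivity
  rw [hG _ _ _ hσ, hv _ hts, hv _ htT', hv _ hTs, hA2, hB2, hAB2,
    hG _ _ _ hv1, hG _ _ _ hv2, hG _ _ _ hv3,
    hm _ _ hts, hm _ _ htT', hm _ _ hTs, hAB, hS1, hS2, hS3]
  have hpi : (0:ℝ) < Real.pi := Real.pi_pos
  set v1 : ℝ := D ^ 2 * (1 - A ^ 2) / (2 * k) with hv1d
  set v2 : ℝ := D ^ 2 * (1 - B ^ 2) / (2 * k) with hv2d
  set v3 : ℝ := D ^ 2 * (1 - (A * B) ^ 2) / (2 * k) with hv3d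
  set σ : ℝ := (D ^ 2 / k) * ((1 - B ^ 2) / (2 * B)) * ((1 - A ^ 2) / (2 * A)) /
      ((1 - (A * B) ^ 2) / (2 * (A * B))) with hσd
  have hσ' : (0:ℝ) < σ := by rw [hσd]; positivity
  have key1 : (2 * Real.pi * v1) ^ (-(1:ℝ) / 2) * (2 * Real.pi * v2) ^ (-(1:ℝ) / 2) /
      (2 * Real.pi * v3) ^ (-(1:ℝ) / 2) = (2 * Real.pi * σ) ^ (-(1:ℝ) / 2) := by
    rw [← Real.mul_rpow (by positivity) (by positivity),
      ← Real.div_rpow (by positivity) (by positivity)]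
    congr 1
    rw [hv1d, hv2d, hv3d, hσd]
    field_simp
  have key2 : Real.exp (-(x - (μ + (y - μ) * A)) ^ 2 / (2 * v1)) *
      Real.exp (-(z - (μ + (x - μ) * B)) ^ 2 / (2 * v2)) /
      Real.exp (-(z - (μ + (y - μ) * (A * B))) ^ 2 / (2 * v3)) =
      Real.exp (-(x - (μ + ((y - μ) * ((1 - B ^ 2) / (2 * B)) +
        (z - μ) * ((1 - A ^ 2) / (2 * A))) / ((1 - (A * B) ^ 2) / (2 * (A * B))))) ^ 2 /
        (2 * σ)) := by
    rw [← Real.exp_add, ← Real.exp_sub]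
    congr 1
    rw [hv1d, hv2d, hv3d, hσd]
    have hne : (1:ℝ) - A ^ 2 * B ^ 2 ≠ 0 := by rw [← mul_pow]; exact h1AB.ne'
    field_simp
    ring
  calc (2 * Real.pi * v1) ^ (-(1:ℝ) / 2) *
        Real.exp (-(x - (μ + (y - μ) * A)) ^ 2 / (2 * v1)) *
        ((2 * Real.pi * v2) ^ (-(1:ℝ) / 2) *
        Real.exp (-(z - (μ + (x - μ) * B)) ^ 2 / (2 * v2))) /
        ((2 * Real.pi * v3) ^ (-(1:ℝ) / 2) *
        Real.exp (-(z - (μ + (y - μ) * (A * B))) ^ 2 / (2 * v3)))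
      = ((2 * Real.pi * v1) ^ (-(1:ℝ) / 2) * (2 * Real.pi * v2) ^ (-(1:ℝ) / 2) /
        (2 * Real.pi * v3) ^ (-(1:ℝ) / 2)) *
        (Real.exp (-(x - (μ + (y - μ) * A)) ^ 2 / (2 * v1)) *
        Real.exp (-(z - (μ + (x - μ) * B)) ^ 2 / (2 * v2)) /
        Real.exp (-(z - (μ + (y - μ) * (A * B))) ^ 2 / (2 * v3))) := by ring
    _ = _ := by rw [key1, key2]
end

section
/- Let k > 0, D > 0 and μ, y ∈ ℝ. Define p(t, x) = (2πv(t))^(−1/2)·exp(−(x − m(t))²/(2v(t))) for t > 0 and x ∈ ℝ, where m(t) = μ + (y − μ)e^(−kt) and v(t) = D²(1 − e^(−2kt))/(2k). Then p satisfies the Fokker–Planck equation of the Ornstein–Uhlenbeck process: for every t > 0 and x ∈ ℝ, ∂_t p(t, x) = −∂_x[k(μ − x)·p(t, x)] + (D²/2)·∂²_x p(t, x). -/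
/-- The Gaussian propagator of the Ornstein–Uhlenbeck process, with mean
`m(t) = μ + (y − μ)e^(−kt)` and variance `v(t) = D²(1 − e^(−2kt))/(2k)`, satisfies the
Fokker–Planck equation `∂_t p = −∂_x[k(μ − x)p] + (D²/2)∂²_x p` for all `t > 0`, `x ∈ ℝ`. -/
theorem ou_propagator_fokker_planck
    (k D μ y : ℝ) (hk : 0 < k) (hD : 0 < D)
    (m v : ℝ → ℝ)
    (hm : ∀ t : ℝ, m t = μ + (y - μ) * Real.exp (-k * t))
    (hv : ∀ t : ℝ, v t = D ^ 2 * (1 - Real.exp (-2 * k * t)) / (2 * k))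
    (p : ℝ → ℝ → ℝ)
    (hp : ∀ t x : ℝ, 0 < t →
      p t x = (2 * Real.pi * v t) ^ (-(1 : ℝ) / 2) *
        Real.exp (-(x - m t) ^ 2 / (2 * v t))) :
    ∀ t > 0, ∀ x : ℝ,
      deriv (fun s => p s x) t =
        - deriv (fun w => k * (μ - w) * p t w) x +
          (D ^ 2 / 2) * deriv (deriv (fun w => p t w)) x := by
  intro t ht x
  have hπ : (0:ℝ) < Real.pi := Real.pi_pos
  have hexp1 : Real.exp (-2 * k * t) < 1 := by
    rw [Real.exp_lt_one_iff]; nlinarith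
  have hV : 0 < v t := by
    rw [hv]
    apply div_pos (mul_pos (pow_pos hD 2) (by linarith)) (by linarith)
  have h2πV : (0:ℝ) < 2 * Real.pi * v t := by positivity
  -- derivatives of m and v at t
  have hlin : HasDerivAt (fun s : ℝ => -k * s) (-k) t := by
    simpa using (hasDerivAt_id t).const_mul (-k)
  have hlin2 : HasDerivAt (fun s : ℝ => -2 * k * s) (-2 * k) t := by
    simpa using (hasDerivAt_id t).const_mul (-2 * k)
  have hmd : HasDerivAt m (-(k * (m t - μ))) t := by
    have h := ((hlin.exp.const_mul (y - μ)).const_add μ)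
    rw [show m = fun s => μ + (y - μ) * Real.exp (-k * s) from funext hm]
    refine h.congr_deriv ?_
    beta_reduce
    ring
  have hvd : HasDerivAt v (D ^ 2 - 2 * k * v t) t := by
    have h := (((hasDerivAt_const t (1:ℝ)).sub hlin2.exp).const_mul (D ^ 2)).div_const (2 * k)
    rw [show v = fun s => D ^ 2 * (1 - Real.exp (-2 * k * s)) / (2 * k) from funext hv]
    refine h.congr_deriv ?_
    beta_reduce
    field_simp
    ring
  set V := v t with hVdef
  set M := m t with hMdef
  set A := (2 * Real.pi * V) ^ (-(1:ℝ) / 2) with hA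
  set E := Real.exp (-(x - M) ^ 2 / (2 * V)) with hE
  -- time derivative
  have hFd : HasDerivAt (fun s => (2 * Real.pi * v s) ^ (-(1:ℝ)/2) *
      Real.exp (-(x - m s) ^ 2 / (2 * v s)))
      ((-(1:ℝ)/2 * (2 * Real.pi * V) ^ (-(1:ℝ)/2 - 1)) * (2 * Real.pi * (D ^ 2 - 2 * k * V)) * E
       + A * (E * (((-(2 * (x - M) ^ 1 * (0 - -(k * (M - μ))))) * (2 * V)
            - (-(x - M) ^ 2) * (2 * (D ^ 2 - 2 * k * V))) / (2 * V) ^ 2))) t := by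
    have hu : HasDerivAt (fun s => 2 * Real.pi * v s) (2 * Real.pi * (D ^ 2 - 2 * k * V)) t :=
      hvd.const_mul (2 * Real.pi)
    have hA' : HasDerivAt (fun s => (2 * Real.pi * v s) ^ (-(1:ℝ)/2))
        ((-(1:ℝ)/2 * (2 * Real.pi * V) ^ (-(1:ℝ)/2 - 1)) * (2 * Real.pi * (D ^ 2 - 2 * k * V))) t := by
      exact (Real.hasDerivAt_rpow_const (p := -(1:ℝ)/2) (Or.inl (ne_of_gt h2πV))).comp t hu
    have hnum : HasDerivAt (fun s => -(x - m s) ^ 2)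
        (-(2 * (x - M) ^ 1 * (0 - -(k * (M - μ))))) t := by
      exact_mod_cast (((hasDerivAt_const t x).sub hmd).pow 2).neg
    have hden : HasDerivAt (fun s => 2 * v s) (2 * (D ^ 2 - 2 * k * V)) t := hvd.const_mul 2
    have hEexp := ((hnum.div hden (by positivity)).exp)
    exact hA'.mul hEexp
  have hLHS : deriv (fun s => p s x) t =
      (-(1:ℝ)/2 * (2 * Real.pi * V) ^ (-(1:ℝ)/2 - 1)) * (2 * Real.pi * (D ^ 2 - 2 * k * V)) * E
       + A * (E * (((-(2 * (x - M) ^ 1 * (0 - -(k * (M - μ))))) * (2 * V)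
            - (-(x - M) ^ 2) * (2 * (D ^ 2 - 2 * k * V))) / (2 * V) ^ 2)) := by
    rw [Filter.EventuallyEq.deriv_eq (f := (fun s => (2 * Real.pi * v s) ^ (-(1:ℝ)/2) *
      Real.exp (-(x - m s) ^ 2 / (2 * v s))))]
    · exact hFd.deriv
    · filter_upwards [eventually_gt_nhds ht] with s hs
      exact hp s x hs
  -- spatial derivatives
  have hpt : (fun w => p t w) = fun w => A * Real.exp (-(w - M) ^ 2 / (2 * V)) := by
    funext w; exact hp t w ht
  have hq : ∀ w : ℝ, HasDerivAt (fun w => A * Real.exp (-(w - M) ^ 2 / (2 * V)))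
      ((A * Real.exp (-(w - M) ^ 2 / (2 * V))) * ((M - w) / V)) w := by
    intro w
    have h1 : HasDerivAt (fun w : ℝ => -(w - M) ^ 2) (-(2 * (w - M))) w := by
      exact (((hasDerivAt_id w).sub_const M).pow 2).neg.congr_deriv (by simp)
    have h4 := ((h1.div_const (2 * V)).exp).const_mul A
    refine h4.congr_deriv ?_
    field_simp
    ring
  have hderivq : deriv (fun w => p t w) =
      fun w => (A * Real.exp (-(w - M) ^ 2 / (2 * V))) * ((M - w) / V) := by
    rw [hpt]; funext w; exact (hq w).deriv
  have hq' : HasDerivAt (fun w => (A * Real.exp (-(w - M) ^ 2 / (2 * V))) * ((M - w) / V))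
      ((A * E * ((M - x) / V)) * ((M - x) / V) + (A * E) * ((0 - 1) / V)) x := by
    have h5 : HasDerivAt (fun w : ℝ => (M - w) / V) ((0 - 1) / V) x :=
      (((hasDerivAt_const x M).sub (hasDerivAt_id x)).div_const V)
    exact (hq x).mul h5
  have hRHS2 : deriv (deriv (fun w => p t w)) x =
      (A * E * ((M - x) / V)) * ((M - x) / V) + (A * E) * ((0 - 1) / V) := by
    rw [hderivq]; exact hq'.deriv
  have hRHS1 : deriv (fun w => k * (μ - w) * p t w) x =
      (k * (0 - 1)) * (A * E) + (k * (μ - x)) * (A * E * ((M - x) / V)) := by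
    have hkf : HasDerivAt (fun w : ℝ => k * (μ - w)) (k * (0 - 1)) x :=
      ((hasDerivAt_const x μ).sub (hasDerivAt_id x)).const_mul k
    have := hkf.mul (hq x)
    rw [show (fun w => k * (μ - w) * p t w) =
        fun w => (k * (μ - w)) * (A * Real.exp (-(w - M) ^ 2 / (2 * V))) by
      funext w; rw [hp t w ht]]
    exact this.deriv
  rw [hLHS, hRHS1, hRHS2]
  have hpow : (2 * Real.pi * V) ^ (-(1:ℝ)/2 - 1) = A / (2 * Real.pi * V) := by
    rw [hA, Real.rpow_sub h2πV, Real.rpow_one]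
  rw [hpow]
  have hMμ : k * (M - μ) = k * (M - μ) := rfl
  field_simp
  ring
end
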